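/- (Theorem 7, upper estimate.) Let n ≥ 1 and let D⁰ = {z ∈ ℂⁿ : |z₁| + … + |z_n| < 1}. For every real r with 1/3 < r < 1 there exists a power series Σ_α c_α z^α converging at every point of D⁰ with |Σ_α c_α z^α| < 1 on D⁰, such that Σ_α |c_α| · (α₁!···α_n!·(n−1)!/(|α|+n−1)!) · r^{|α|} ≥ 1. Hence L_n(D⁰) ≤ 1/3. -/

import Mathlib

open Finset

namespace BohrHypercone

/-- Coefficients of the Möbius map `(a - w)/(1 - a w)`. -/
def bcoef (a : ℝ) : ℕ → ℝ
  | 0 => a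
  | k + 1 => -((1 - a ^ 2) * a ^ k)

lemma abs_bcoef (a : ℝ) (ha : 0 ≤ a) (ha1 : a ≤ 1) :
    ∀ k, |bcoef a k| = if k = 0 then a else (1 - a ^ 2) * a ^ (k - 1)
  | 0 => by simp [bcoef, abs_of_nonneg ha]
  | k + 1 => by
      have h1 : (0:ℝ) ≤ 1 - a ^ 2 := by nlinarith
      have h2 : (0:ℝ) ≤ a ^ k := pow_nonneg ha k
      simp [bcoef, abs_of_nonneg, mul_nonneg h1 h2]

lemma abs_bcoef_le_one (a : ℝ) (ha : 0 ≤ a) (ha1 : a ≤ 1) (k : ℕ) :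
    |bcoef a k| ≤ 1 := by
  rw [abs_bcoef a ha ha1]
  split
  · exact ha1
  · have h1 : (0:ℝ) ≤ 1 - a ^ 2 := by nlinarith
    have h2 : a ^ (k - 1) ≤ 1 := pow_le_one₀ ha ha1
    have h3 : (0:ℝ) ≤ a ^ (k-1) := pow_nonneg ha _
    nlinarith

instance fiberFintype (n k : ℕ) : Fintype {α : Fin n → ℕ // (∑ j, α j) = k} :=
  Fintype.ofFinset ((Finset.univ : Finset (Fin n)).piAntidiag k) (by
    intro α; simp [Finset.mem_piAntidiag]; exact Iff.rfl)

lemma card_fiber (n k : ℕ) :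
    Fintype.card {α : Fin n → ℕ // (∑ j, α j) = k} = (n + k - 1).choose k := by
  rw [Fintype.card_of_subtype ((Finset.univ : Finset (Fin n)).piAntidiag k)
    (by intro α; simp [Finset.mem_piAntidiag])]
  rw [← Finset.map_sym_eq_piAntidiag, Finset.card_map, Finset.sym_univ, Finset.card_univ,
    Sym.card_sym_eq_choose, Fintype.card_fin]

lemma sum_fiber {M : Type*} [AddCommMonoid M] (n k : ℕ) (f : (Fin n → ℕ) → M) :
    ∑ x : {α : Fin n → ℕ // (∑ j, α j) = k}, f x.1 =
      ∑ α ∈ (Finset.univ : Finset (Fin n)).piAntidiag k, f α :=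
  (Finset.sum_subtype _ (by intro α; simp [Finset.mem_piAntidiag]) f).symm

lemma hasSum_fiberwise {n : ℕ} {M : Type*} [AddCommMonoid M] [TopologicalSpace M]
    [ContinuousAdd M] [RegularSpace M]
    {f : (Fin n → ℕ) → M} {S : M} (hf : HasSum f S) :
    HasSum (fun k => ∑ α ∈ (Finset.univ : Finset (Fin n)).piAntidiag k, f α) S := by
  have h1 : HasSum (f ∘ (Equiv.sigmaFiberEquiv (fun α : Fin n → ℕ => ∑ j, α j))) S :=
    (Equiv.hasSum_iff _).2 hf
  refine h1.sigma fun k => ?_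
  have h2 := hasSum_fintype (fun x : {α : Fin n → ℕ // (∑ j, α j) = k} => f x.1)
  rwa [sum_fiber] at h2

lemma summable_of_fiberwise {n : ℕ} {f : (Fin n → ℕ) → ℝ} (hf : ∀ α, 0 ≤ f α)
    (h : Summable fun k => ∑ α ∈ (Finset.univ : Finset (Fin n)).piAntidiag k, f α) :
    Summable f := by
  have hsig : Summable (fun p : (Σ k : ℕ, {α : Fin n → ℕ // (∑ j, α j) = k}) => f p.2.1) := by
    rw [summable_sigma_of_nonneg (fun x => hf _)]
    refine ⟨fun k => (hasSum_fintype _).summable, ?_⟩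
    convert h using 1
    funext k
    rw [tsum_fintype]
    exact sum_fiber n k f
  exact (Equiv.summable_iff (Equiv.sigmaFiberEquiv (fun α : Fin n → ℕ => ∑ j, α j))).1 hsig

lemma hasSum_bw (a : ℝ) (w : ℂ) (ha : 0 < a) (ha1 : a < 1) (hw : ‖w‖ < 1) :
    HasSum (fun k => (bcoef a k : ℂ) * w ^ k) (((a : ℂ) - w) / (1 - (a : ℂ) * w)) := by
  have hu : ‖(a : ℂ) * w‖ < 1 := by
    rw [norm_mul, Complex.norm_real, Real.norm_eq_abs, abs_of_pos ha]
    nlinarith [norm_nonneg w]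
  have hne : (1 : ℂ) - (a : ℂ) * w ≠ 0 := by
    intro h
    rw [sub_eq_zero] at h
    rw [← h] at hu
    simp at hu
  have h1 : HasSum (fun k => ((a : ℂ) * w) ^ k) (1 - (a : ℂ) * w)⁻¹ :=
    hasSum_geometric_of_norm_lt_one hu
  have h2 := h1.mul_left (-((1 - (a : ℂ) ^ 2) * w))
  have h3 : HasSum (fun k => (bcoef a (k + 1) : ℂ) * w ^ (k + 1))
      (-((1 - (a : ℂ) ^ 2) * w) * (1 - (a : ℂ) * w)⁻¹) := by
    convert h2 using 2 with k
    rfl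
    simp only [bcoef]
    push_cast
    ring
  refine (hasSum_nat_add_iff' 1).1 ?_
  have hT : ((a : ℂ) - w) / (1 - (a : ℂ) * w) - ∑ i ∈ Finset.range 1, (bcoef a i : ℂ) * w ^ i
      = -((1 - (a : ℂ) ^ 2) * w) * (1 - (a : ℂ) * w)⁻¹ := by
    simp only [Finset.sum_range_one, bcoef, pow_zero, mul_one]
    field_simp
    ring
  rw [hT]
  exact h3

lemma hasSum_abs_b (a r : ℝ) (ha : 0 < a) (ha1 : a < 1) (hr : 0 < r) (hr1 : r < 1) :
    HasSum (fun k => |bcoef a k| * r ^ k) (a + (1 - a ^ 2) * r / (1 - a * r)) := by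
  have hu : |a * r| < 1 := by
    rw [abs_of_pos (mul_pos ha hr)]; nlinarith
  have hne : (1 : ℝ) - a * r ≠ 0 := by nlinarith [abs_lt.1 hu]
  have h1 : HasSum (fun k => (a * r) ^ k) (1 - a * r)⁻¹ := hasSum_geometric_of_abs_lt_one hu
  have h2 := h1.mul_left ((1 - a ^ 2) * r)
  have h3 : HasSum (fun k => |bcoef a (k + 1)| * r ^ (k + 1))
      ((1 - a ^ 2) * r * (1 - a * r)⁻¹) := by
    convert h2 using 2 with k
    rfl
    rw [abs_bcoef a ha.le ha1.le]
    simp only [Nat.succ_ne_zero, if_false, Nat.add_sub_cancel]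
    ring
  refine (hasSum_nat_add_iff' 1).1 ?_
  have hT : a + (1 - a ^ 2) * r / (1 - a * r) - ∑ i ∈ Finset.range 1, |bcoef a i| * r ^ i
      = (1 - a ^ 2) * r * (1 - a * r)⁻¹ := by
    have hb0 : |bcoef a 0| = a := by simp [bcoef, abs_of_nonneg ha.le]
    rw [Finset.sum_range_one, hb0, pow_zero, mul_one, add_sub_cancel_left, div_eq_mul_inv]
  rw [hT]
  exact h3

lemma norm_moebius_lt_one (a : ℝ) (w : ℂ) (ha : 0 < a) (ha1 : a < 1) (hw : ‖w‖ < 1) :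
    ‖((a : ℂ) - w) / (1 - (a : ℂ) * w)‖ < 1 := by
  have hu : ‖(a : ℂ) * w‖ < 1 := by
    rw [norm_mul, Complex.norm_real, Real.norm_eq_abs, abs_of_pos ha]
    nlinarith [norm_nonneg w]
  have hne : (1 : ℂ) - (a : ℂ) * w ≠ 0 := by
    intro h
    rw [sub_eq_zero] at h
    rw [← h] at hu
    simp at hu
  rw [norm_div, div_lt_one (norm_pos_iff.2 hne)]
  have hsq1 : ‖(a : ℂ) - w‖ ^ 2 = (a - w.re) ^ 2 + w.im ^ 2 := by
    rw [Complex.sq_norm, Complex.normSq_apply]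
    simp [Complex.sub_re, Complex.sub_im]
    ring
  have hsq2 : ‖1 - (a : ℂ) * w‖ ^ 2 = (1 - a * w.re) ^ 2 + (a * w.im) ^ 2 := by
    rw [Complex.sq_norm, Complex.normSq_apply]
    simp [Complex.sub_re, Complex.sub_im, Complex.mul_re, Complex.mul_im]
    ring
  have hw2 : w.re ^ 2 + w.im ^ 2 < 1 := by
    have h1 : ‖w‖ ^ 2 < 1 := by nlinarith [norm_nonneg w]
    rwa [Complex.sq_norm, Complex.normSq_apply, ← sq, ← sq] at h1
  refine lt_of_pow_lt_pow_left₀ 2 (norm_nonneg _) ?_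
  rw [hsq1, hsq2]
  nlinarith [mul_pos (by nlinarith : (0:ℝ) < 1 - a ^ 2)
    (by nlinarith : (0:ℝ) < 1 - (w.re ^ 2 + w.im ^ 2))]

end BohrHypercone

open BohrHypercone

/-- Theorem 7, upper estimate: for the unit hypercone `D⁰`, for every
`1/3 < r < 1` there is a power series bounded by `1` on `D⁰` whose Bohr-type
sum of `L¹`-norms at radius `r` is at least `1`; hence `L_n(D⁰) ≤ 1/3`. -/
theorem bohr_hypercone_L1_upper (n : ℕ) (hn : 1 ≤ n) :
    ∀ r : ℝ, 1 / 3 < r → r < 1 →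
      ∃ c : (Fin n → ℕ) → ℂ,
        (∀ z : Fin n → ℂ, (∑ j, ‖z j‖ < 1) →
          Summable (fun α : Fin n → ℕ => ‖c α * ∏ j, z j ^ α j‖)) ∧
        (∀ z : Fin n → ℂ, (∑ j, ‖z j‖ < 1) →
          ‖∑' α : Fin n → ℕ, c α * ∏ j, z j ^ α j‖ < 1) ∧
        1 ≤ ∑' α : Fin n → ℕ, ENNReal.ofReal
          (‖c α‖ * ((∏ j, ((α j).factorial : ℝ)) * ((n - 1).factorial : ℝ) /
            (((∑ j, α j) + n - 1).factorial : ℝ)) * r ^ (∑ j, α j)) := by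
  intro r hr3 hr1
  have hr0 : 0 < r := by linarith
  set a : ℝ := (1 - r) / (2 * r) with ha_def
  have ha0 : 0 < a := by
    apply div_pos <;> linarith
  have ha1 : a < 1 := by
    rw [div_lt_one (by linarith)]
    linarith
  -- the coefficients
  set c : (Fin n → ℕ) → ℂ :=
    fun α => ((bcoef a (∑ j, α j) * (Nat.multinomial Finset.univ α : ℝ) : ℝ) : ℂ) with hc_def
  -- norm of a coefficient times monomial
  have hnorm : ∀ (z : Fin n → ℂ) (α : Fin n → ℕ),
      ‖c α * ∏ j, z j ^ α j‖ =
        |bcoef a (∑ j, α j)| * ((Nat.multinomial Finset.univ α : ℝ) * ∏ j, ‖z j‖ ^ α j) := by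
    intro z α
    rw [hc_def]
    rw [norm_mul, Complex.norm_real, Real.norm_eq_abs, abs_mul, Nat.abs_cast, norm_prod]
    simp only [norm_pow]
    ring
  -- fiberwise norm sums
  have hfibnorm : ∀ (z : Fin n → ℂ) (k : ℕ),
      ∑ α ∈ (Finset.univ : Finset (Fin n)).piAntidiag k, ‖c α * ∏ j, z j ^ α j‖ =
        |bcoef a k| * (∑ j, ‖z j‖) ^ k := by
    intro z k
    rw [Finset.sum_pow_eq_sum_piAntidiag, Finset.mul_sum]
    refine Finset.sum_congr rfl fun α hα => ?_
    rw [Finset.mem_piAntidiag] at hα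
    have hk : ∑ j, α j = k := hα.1
    rw [hnorm, hk]
  -- summability of norms
  have hsummable : ∀ z : Fin n → ℂ, (∑ j, ‖z j‖ < 1) →
      Summable (fun α : Fin n → ℕ => ‖c α * ∏ j, z j ^ α j‖) := by
    intro z hz
    refine summable_of_fiberwise (fun α => norm_nonneg _) ?_
    have hs0 : 0 ≤ ∑ j, ‖z j‖ := Finset.sum_nonneg fun j _ => norm_nonneg _
    refine Summable.of_nonneg_of_le (fun k => ?_) (fun k => ?_)
      (summable_geometric_of_lt_one hs0 hz)
    · rw [hfibnorm]
      positivity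
    · rw [hfibnorm]
      have := abs_bcoef_le_one a ha0.le ha1.le k
      have h2 : (0:ℝ) ≤ (∑ j, ‖z j‖) ^ k := pow_nonneg hs0 k
      nlinarith
  refine ⟨c, hsummable, ?_, ?_⟩
  · -- modulus of the sum is < 1
    intro z hz
    set w : ℂ := ∑ j, z j with hw_def
    have hwnorm : ‖w‖ < 1 := lt_of_le_of_lt (norm_sum_le _ _) hz
    have hsum : Summable fun α : Fin n → ℕ => c α * ∏ j, z j ^ α j :=
      (hsummable z hz).of_norm
    have hfib := hasSum_fiberwise hsum.hasSum
    have hfibval : ∀ k : ℕ,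
        ∑ α ∈ (Finset.univ : Finset (Fin n)).piAntidiag k, (c α * ∏ j, z j ^ α j) =
          (bcoef a k : ℂ) * w ^ k := by
      intro k
      rw [hw_def, Finset.sum_pow_eq_sum_piAntidiag, Finset.mul_sum]
      refine Finset.sum_congr rfl fun α hα => ?_
      rw [Finset.mem_piAntidiag] at hα
      have hk : ∑ j, α j = k := hα.1
      rw [hc_def]
      simp only [hk]
      push_cast
      ring
    simp only [hfibval] at hfib
    have hmo := hasSum_bw a w ha0 ha1 hwnorm
    have heq : (∑' α : Fin n → ℕ, c α * ∏ j, z j ^ α j)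
        = ((a : ℂ) - w) / (1 - (a : ℂ) * w) := hfib.unique hmo
    rw [heq]
    exact norm_moebius_lt_one a w ha0 ha1 hwnorm
  · -- the Bohr-type sum is ≥ 1
    -- value of each term on the fiber over k
    have hterm : ∀ (k : ℕ) (α : Fin n → ℕ), (∑ j, α j) = k →
        (‖c α‖ * ((∏ j, ((α j).factorial : ℝ)) * ((n - 1).factorial : ℝ) /
            (((∑ j, α j) + n - 1).factorial : ℝ)) * r ^ (∑ j, α j))
          = |bcoef a k| * r ^ k / ((n + k - 1).choose k : ℝ) := by
      intro k α hk
      have hcn : ‖c α‖ = |bcoef a k| * (Nat.multinomial Finset.univ α : ℝ) := by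
        rw [hc_def]
        simp only [hk]
        rw [Complex.norm_real, Real.norm_eq_abs, abs_mul, Nat.abs_cast]
      have hmult : ((Nat.multinomial Finset.univ α : ℝ)) * (∏ j, ((α j).factorial : ℝ))
          = (k.factorial : ℝ) := by
        rw [← Nat.cast_prod, ← Nat.cast_mul, mul_comm, Nat.multinomial_spec, hk]
      have hchoose : ((n + k - 1).choose k : ℝ) * ((k.factorial : ℝ) * ((n - 1).factorial : ℝ))
          = ((k + n - 1).factorial : ℝ) := by
        have h1 : k ≤ n + k - 1 := by omega
        have h2 : n + k - 1 - k = n - 1 := by omega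
        have h3 : k + n - 1 = n + k - 1 := by omega
        have h4 : (n + k - 1).choose k * (k.factorial * (n - 1).factorial)
            = (k + n - 1).factorial := by
          rw [h3, ← h2, ← mul_assoc, Nat.choose_mul_factorial_mul_factorial h1]
        exact_mod_cast congrArg (Nat.cast (R := ℝ)) h4
      have hfacpos : (0:ℝ) < ((k + n - 1).factorial : ℝ) := by positivity
      have hchoosepos : (0:ℝ) < ((n + k - 1).choose k : ℝ) := by
        have : 0 < (n + k - 1).choose k := Nat.choose_pos (by omega)
        exact_mod_cast this
      rw [hcn, hk, eq_div_iff hchoosepos.ne']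
      rw [div_eq_mul_inv]
      have hinv : ((k + n - 1).factorial : ℝ)⁻¹ * ((n + k - 1).choose k : ℝ)
          = ((k.factorial : ℝ) * ((n - 1).factorial : ℝ))⁻¹ := by
        rw [← hchoose, mul_inv, mul_comm, ← mul_assoc, mul_inv_cancel₀ hchoosepos.ne', one_mul]
      calc |bcoef a k| * (Nat.multinomial Finset.univ α : ℝ) *
            ((∏ j, ((α j).factorial : ℝ)) * ((n - 1).factorial : ℝ) *
              ((k + n - 1).factorial : ℝ)⁻¹) * r ^ k * ((n + k - 1).choose k : ℝ)
          = |bcoef a k| * r ^ k * (((Nat.multinomial Finset.univ α : ℝ) *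
              (∏ j, ((α j).factorial : ℝ))) * ((n - 1).factorial : ℝ) *
              (((k + n - 1).factorial : ℝ)⁻¹ * ((n + k - 1).choose k : ℝ))) := by ring
        _ = |bcoef a k| * r ^ k := by
            rw [hmult, hinv, mul_inv_cancel₀ (by positivity)]
            rw [mul_one]
    -- regroup the ENNReal sum by total degree
    have hregroup :
        (∑' α : Fin n → ℕ, ENNReal.ofReal
          (‖c α‖ * ((∏ j, ((α j).factorial : ℝ)) * ((n - 1).factorial : ℝ) /
            (((∑ j, α j) + n - 1).factorial : ℝ)) * r ^ (∑ j, α j)))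
        = ∑' k : ℕ, ENNReal.ofReal (|bcoef a k| * r ^ k) := by
      rw [← (Equiv.sigmaFiberEquiv (fun α : Fin n → ℕ => ∑ j, α j)).tsum_eq]
      rw [ENNReal.tsum_sigma']
      congr 1
      funext k
      have hconst : ∀ x : {α : Fin n → ℕ // (∑ j, α j) = k},
          ENNReal.ofReal
          (‖c x.1‖ * ((∏ j, ((x.1 j).factorial : ℝ)) * ((n - 1).factorial : ℝ) /
            (((∑ j, x.1 j) + n - 1).factorial : ℝ)) * r ^ (∑ j, x.1 j))
          = ENNReal.ofReal (|bcoef a k| * r ^ k / ((n + k - 1).choose k : ℝ)) := by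
        intro x
        rw [hterm k x.1 x.2]
      calc (∑' x : {α : Fin n → ℕ // (∑ j, α j) = k}, ENNReal.ofReal
          (‖c x.1‖ * ((∏ j, ((x.1 j).factorial : ℝ)) * ((n - 1).factorial : ℝ) /
            (((∑ j, x.1 j) + n - 1).factorial : ℝ)) * r ^ (∑ j, x.1 j)))
          = ∑' _ : {α : Fin n → ℕ // (∑ j, α j) = k},
              ENNReal.ofReal (|bcoef a k| * r ^ k / ((n + k - 1).choose k : ℝ)) := by
            exact tsum_congr hconst
        _ = (Fintype.card {α : Fin n → ℕ // (∑ j, α j) = k}) •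
              ENNReal.ofReal (|bcoef a k| * r ^ k / ((n + k - 1).choose k : ℝ)) := by
            rw [tsum_fintype, Finset.sum_const, Finset.card_univ]
        _ = ENNReal.ofReal (|bcoef a k| * r ^ k) := by
            rw [card_fiber, nsmul_eq_mul]
            have hchoosepos : (0:ℝ) < ((n + k - 1).choose k : ℝ) := by
              have : 0 < (n + k - 1).choose k := Nat.choose_pos (by omega)
              exact_mod_cast this
            rw [← ENNReal.ofReal_natCast, ← ENNReal.ofReal_mul (by positivity)]
            congr 1
            field_simp
    rw [hregroup]
    -- the geometric-type series sums to exactly 1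
    have hgeo := hasSum_abs_b a r ha0 ha1 hr0 hr1
    have hval : a + (1 - a ^ 2) * r / (1 - a * r) = 1 := by
      have har : a * r = (1 - r) / 2 := by
        rw [ha_def]; field_simp
      have hone : 1 - a * r = (1 + r) / 2 := by rw [har]; ring
      rw [hone, ha_def]
      field_simp
      ring
    rw [hval] at hgeo
    have hnn : ∀ k : ℕ, 0 ≤ |bcoef a k| * r ^ k := fun k => by positivity
    rw [← ENNReal.ofReal_tsum_of_nonneg hnn hgeo.summable, hgeo.tsum_eq]
    simp
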